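/- For any finite graph G with chromatic number χ ≥ 2, there exists a G-separating system of size ⌈log₂ χ⌉, and no G-separating system of size strictly smaller than ⌈log₂ χ⌉ exists. -/

import Mathlib

/-- A `G`-separating system: every edge is separated by some set. -/
def IsSepSys {V : Type*} (G : SimpleGraph V) {m : ℕ} (I : Fin m → Finset V) : Prop :=
  ∀ u v : V, G.Adj u v → ∃ i, (u ∈ I i ∧ v ∉ I i) ∨ (u ∉ I i ∧ v ∈ I i)

/-- a graph with chromatic number χ ≥ 2 has a G-separating system
of size ⌈log₂ χ⌉ and none of strictly smaller size. -/
theorem stmt_2 {V : Type*} [Fintype V] (G : SimpleGraph V) (χ : ℕ)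
    (hχ : G.chromaticNumber = (χ : ℕ∞)) (h2 : 2 ≤ χ) :
    (∃ I : Fin (Nat.clog 2 χ) → Finset V, IsSepSys G I) ∧
    (∀ m : ℕ, ∀ I : Fin m → Finset V, IsSepSys G I → Nat.clog 2 χ ≤ m) := by
  classical
  obtain ⟨C⟩ : G.Colorable χ := by
    rw [← SimpleGraph.chromaticNumber_le_iff_colorable, hχ]
  constructor
  · refine ⟨fun i => Finset.univ.filter (fun v => Nat.testBit (C v) i), ?_⟩
    intro u v huv
    have hne : ((C u : ℕ)) ≠ (C v : ℕ) := fun h => (C.valid huv) (Fin.ext h)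
    by_contra h
    push_neg at h
    apply hne
    apply Nat.eq_of_testBit_eq
    intro i
    by_cases hi : i < Nat.clog 2 χ
    · have := h ⟨i, hi⟩
      simp only [Finset.mem_filter, Finset.mem_univ, true_and] at this
      by_cases h1 : Nat.testBit (C u) i <;> by_cases h2' : Nat.testBit (C v) i <;>
        simp_all
    · have hk : χ ≤ 2 ^ Nat.clog 2 χ := Nat.le_pow_clog (by norm_num) χ
      have hpow : (2 : ℕ) ^ Nat.clog 2 χ ≤ 2 ^ i :=
        Nat.pow_le_pow_right (by norm_num) (not_lt.mp hi)
      rw [Nat.testBit_eq_false_of_lt (lt_of_lt_of_le (C u).isLt (hk.trans hpow)),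
        Nat.testBit_eq_false_of_lt (lt_of_lt_of_le (C v).isLt (hk.trans hpow))]
  · intro m I hI
    have hcol : G.Colorable (2 ^ m) := by
      have C2 : G.Coloring (Fin m → Bool) := SimpleGraph.Coloring.mk
        (fun v i => decide (v ∈ I i))
        (by
          intro u v huv h
          obtain ⟨i, hi⟩ := hI u v huv
          have := congrFun h i
          rcases hi with ⟨h1, h2'⟩ | ⟨h1, h2'⟩ <;> simp [h1, h2'] at this)
      have := C2.colorable
      simpa using this
    have hle : (χ : ℕ∞) ≤ ((2 ^ m : ℕ) : ℕ∞) := by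
      rw [← hχ]; exact hcol.chromaticNumber_le
    rw [Nat.clog_le_iff_le_pow (by norm_num)]
    exact_mod_cast hle
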